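/- For any configuration x without collisions and any nonzero vector y ∈ ℝ^N, the Hessian quadratic form of W = U + I satisfies ⟨y, D²W(x) y⟩ ≥ 2 m_0 |y|², where m_0 = min{m_1,...,m_N} > 0. In particular W is strictly convex on each connected component of the collision-free configuration space. -/

import Mathlib

open Finset

noncomputable def Upot {N : ℕ} (m : Fin N → ℝ) (x : EuclideanSpace ℝ (Fin N)) : ℝ :=
  ∑ i, ∑ j ∈ Finset.Ioi i, m i * m j / |x i - x j|

noncomputable def inertia {N : ℕ} (m : Fin N → ℝ) (x : EuclideanSpace ℝ (Fin N)) : ℝ :=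
  ∑ i, m i * x i ^ 2

section aux

variable {E : Type*} [NormedAddCommGroup E] [NormedSpace ℝ E]

/-- first derivative of `w ↦ c * (M w)⁻¹` -/
lemma aux_hd1 (c : ℝ) (M : E →L[ℝ] ℝ) {z : E} (hz : M z ≠ 0) :
    HasFDerivAt (fun w => c * (M w)⁻¹) ((-c * ((M z) ^ 2)⁻¹) • M) z := by
  have h0 : HasDerivAt (fun t : ℝ => c * t⁻¹) (-c * ((M z) ^ 2)⁻¹) (M z) := by
    have h1 := HasDerivAt.const_mul c ((hasDerivAt_id (M z)).inv hz)
    refine h1.congr_deriv ?_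
    simp only [id]
    ring
  have h2 := h0.comp_hasFDerivAt z M.hasFDerivAt
  exact h2

/-- derivative of `w ↦ -c * ((M w)^2)⁻¹` -/
lemma aux_hd2 (c : ℝ) (M : E →L[ℝ] ℝ) {z : E} (hz : M z ≠ 0) :
    HasFDerivAt (fun w => -c * ((M w) ^ 2)⁻¹) ((2 * c * ((M z) ^ 3)⁻¹) • M) z := by
  have h0 : HasDerivAt (fun t : ℝ => -c * (t ^ 2)⁻¹) (2 * c * ((M z) ^ 3)⁻¹) (M z) := by
    have h1 : HasDerivAt (fun t : ℝ => t ^ 2) (2 * (M z)) (M z) := by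
      simpa using hasDerivAt_pow 2 (M z)
    have h2 := HasDerivAt.const_mul (-c) (h1.inv (pow_ne_zero 2 hz))
    refine h2.congr_deriv ?_
    field_simp
  have h2 := h0.comp_hasFDerivAt z M.hasFDerivAt
  exact h2

lemma aux_harm {c A B t s : ℝ} (hc : 0 ≤ c) (hA : 0 < A) (hB : 0 < B) (ht : 0 ≤ t)
    (hs : 0 ≤ s) (hts : t + s = 1) :
    c / (t * A + s * B) ≤ t * (c / A) + s * (c / B) := by
  have hs1 : s = 1 - t := by linarith
  subst hs1
  have hpos : 0 < t * A + (1 - t) * B := by nlinarith [mul_nonneg ht hA.le, mul_nonneg hs hB.le, mul_pos hA hB]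
  have key : t * (c / A) + (1 - t) * (c / B) - c / (t * A + (1 - t) * B)
      = c * (t * (1 - t) * (A - B) ^ 2) / (A * B * (t * A + (1 - t) * B)) := by
    field_simp
    ring
  have h0 : 0 ≤ c * (t * (1 - t) * (A - B) ^ 2) / (A * B * (t * A + (1 - t) * B)) :=
    div_nonneg (mul_nonneg hc (mul_nonneg (mul_nonneg ht hs) (sq_nonneg _)))
      (le_of_lt (mul_pos (mul_pos hA hB) hpos))
  linarith

end aux

section pairlin

variable {N : ℕ}

/-- The linear functional `z ↦ ±(z i - z j)`, with the sign chosen (depending on the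
reference configuration `x`) so that it is positive at `x`. -/
noncomputable def Mij (x : EuclideanSpace ℝ (Fin N)) (i j : Fin N) :
    EuclideanSpace ℝ (Fin N) →L[ℝ] ℝ :=
  if 0 < x i - x j then EuclideanSpace.proj i - EuclideanSpace.proj j
  else EuclideanSpace.proj j - EuclideanSpace.proj i

lemma Mij_apply (x : EuclideanSpace ℝ (Fin N)) (i j : Fin N) (z : EuclideanSpace ℝ (Fin N)) :
    Mij x i j z = if 0 < x i - x j then z i - z j else z j - z i := by
  unfold Mij
  split <;> simp

lemma Mij_pos (x : EuclideanSpace ℝ (Fin N)) {i j : Fin N} (h : x i ≠ x j) :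
    0 < Mij x i j x := by
  rw [Mij_apply]
  rcases (sub_ne_zero.mpr h).lt_or_gt with h' | h'
  · rw [if_neg (not_lt.mpr h'.le)]
    linarith
  · rw [if_pos h']
    exact h'

lemma Mij_abs (x z : EuclideanSpace ℝ (Fin N)) (i j : Fin N) (hz : 0 < Mij x i j z) :
    |z i - z j| = Mij x i j z := by
  rw [Mij_apply] at hz ⊢
  by_cases h : 0 < x i - x j
  · rw [if_pos h] at hz ⊢
    exact abs_of_pos hz
  · rw [if_neg h] at hz ⊢
    rw [abs_sub_comm]
    exact abs_of_pos hz

end pairlin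

set_option maxHeartbeats 4000000 in
/-- The Hessian of `W = U + I` is uniformly bounded below by `2·min mᵢ`, and in
particular `W` is strictly convex on each connected component `Ω_σ` of the
collision-free configuration space. -/
theorem hessian_lower_bound {N : ℕ} (hN : 0 < N) (m : Fin N → ℝ) (hm : ∀ i, 0 < m i) :
    (∀ x : EuclideanSpace ℝ (Fin N), (∀ i j, i ≠ j → x i ≠ x j) →
      ∀ y : EuclideanSpace ℝ (Fin N), y ≠ 0 →
        iteratedFDeriv ℝ 2 (fun z => Upot m z + inertia m z) x ![y, y] ≥
          2 * (⨅ i, m i) * ‖y‖ ^ 2) ∧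
    (∀ σ : Equiv.Perm (Fin N),
      StrictConvexOn ℝ {x : EuclideanSpace ℝ (Fin N) | StrictMono (x ∘ σ)}
        (fun z => Upot m z + inertia m z)) := by
  have : Nonempty (Fin N) := ⟨⟨0, hN⟩⟩
  constructor
  · -- Hessian lower bound
    intro x hx y _
    classical
    set Ω' : Set (EuclideanSpace ℝ (Fin N)) := {z | ∀ i j : Fin N, i < j → 0 < Mij x i j z} with hΩ'
    -- the local smooth version of W, and its first and second derivatives
    set G : EuclideanSpace ℝ (Fin N) → ℝ := fun z =>
      (∑ i, ∑ j ∈ Finset.Ioi i, (m i * m j) * (Mij x i j z)⁻¹) + ∑ i, m i * z i ^ 2 with hG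
    set F1 : EuclideanSpace ℝ (Fin N) → (EuclideanSpace ℝ (Fin N) →L[ℝ] ℝ) := fun z =>
      (∑ i, ∑ j ∈ Finset.Ioi i, (-(m i * m j) * ((Mij x i j z) ^ 2)⁻¹) • Mij x i j) +
        ∑ i, (2 * m i * z i) • (EuclideanSpace.proj i : EuclideanSpace ℝ (Fin N) →L[ℝ] ℝ) with hF1
    set F2 : EuclideanSpace ℝ (Fin N) →L[ℝ] (EuclideanSpace ℝ (Fin N) →L[ℝ] ℝ) :=
      (∑ i, ∑ j ∈ Finset.Ioi i,
          ((2 * (m i * m j) * ((Mij x i j x) ^ 3)⁻¹) • Mij x i j).smulRight (Mij x i j)) +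
        ∑ i, (((2 * m i) • (EuclideanSpace.proj i : EuclideanSpace ℝ (Fin N) →L[ℝ] ℝ)).smulRight
          (EuclideanSpace.proj i)) with hF2
    have hev : ∀ᶠ z in nhds x, z ∈ Ω' := by
      rw [hΩ']
      refine Filter.eventually_all.2 fun i => Filter.eventually_all.2 fun j => ?_
      by_cases hij : i < j
      · have h1 : ∀ᶠ z in nhds x, 0 < Mij x i j z := by
          have hopen : IsOpen {z : EuclideanSpace ℝ (Fin N) | 0 < Mij x i j z} :=
            isOpen_lt continuous_const (Mij x i j).continuous
          exact hopen.eventually_mem (Mij_pos x (hx i j hij.ne))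
        exact h1.mono fun z hz _ => hz
      · exact Filter.Eventually.of_forall fun z h => absurd h hij
    have hWG : ∀ z ∈ Ω', Upot m z + inertia m z = G z := by
      intro z hz
      rw [hG]
      unfold Upot inertia
      congr 1
      refine Finset.sum_congr rfl fun i _ => Finset.sum_congr rfl fun j hj => ?_
      rw [Mij_abs x z i j (hz i j (Finset.mem_Ioi.mp hj)), div_eq_mul_inv]
    have hG' : ∀ z ∈ Ω', HasFDerivAt G (F1 z) z := by
      intro z hz
      simp only [hG, hF1]
      refine HasFDerivAt.add ?_ ?_
      · refine HasFDerivAt.fun_sum fun i _ => HasFDerivAt.fun_sum fun j hj => ?_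
        have hij : i < j := Finset.mem_Ioi.mp hj
        exact aux_hd1 (m i * m j) (Mij x i j) (hz i j hij).ne'
      · refine HasFDerivAt.fun_sum fun i _ => ?_
        have hsc : HasFDerivAt (fun w : EuclideanSpace ℝ (Fin N) => m i * (w i) ^ 2)
            ((m i * (2 * z i)) • (EuclideanSpace.proj i : EuclideanSpace ℝ (Fin N) →L[ℝ] ℝ)) z := by
          have h1 : HasDerivAt (fun t : ℝ => m i * t ^ 2) (m i * (2 * z i)) (z i) := by
            have := HasDerivAt.const_mul (m i) (hasDerivAt_pow 2 (z i))
            simpa using this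
          exact h1.comp_hasFDerivAt (f := fun w : EuclideanSpace ℝ (Fin N) => w i) z
            (EuclideanSpace.proj i : EuclideanSpace ℝ (Fin N) →L[ℝ] ℝ).hasFDerivAt
        have : (m i * (2 * z i)) = 2 * m i * z i := by ring
        rw [this] at hsc
        exact hsc
    have hfW : ∀ᶠ z in nhds x, fderiv ℝ (fun z => Upot m z + inertia m z) z = F1 z := by
      have hev2 : ∀ᶠ z in nhds x, ∀ᶠ w in nhds z, w ∈ Ω' :=
        eventually_eventually_nhds.2 hev
      filter_upwards [hev, hev2] with z hz hz2
      have heq : (fun z => Upot m z + inertia m z) =ᶠ[nhds z] G :=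
        hz2.mono fun w hw => hWG w hw
      rw [Filter.EventuallyEq.fderiv_eq heq]
      exact (hG' z hz).fderiv
    have hF1' : HasFDerivAt F1 F2 x := by
      simp only [hF1, hF2]
      refine HasFDerivAt.add ?_ ?_
      · refine HasFDerivAt.fun_sum fun i _ => HasFDerivAt.fun_sum fun j hj => ?_
        have hij : i < j := Finset.mem_Ioi.mp hj
        have hne : Mij x i j x ≠ 0 := (Mij_pos x (hx i j hij.ne)).ne'
        exact (aux_hd2 (m i * m j) (Mij x i j) hne).smul_const (Mij x i j)
      · refine HasFDerivAt.fun_sum fun i _ => ?_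
        have h1 : HasFDerivAt (fun z : EuclideanSpace ℝ (Fin N) => 2 * m i * z i)
            ((2 * m i) • (EuclideanSpace.proj i : EuclideanSpace ℝ (Fin N) →L[ℝ] ℝ)) x :=
          (EuclideanSpace.proj i : EuclideanSpace ℝ (Fin N) →L[ℝ] ℝ).hasFDerivAt.const_mul (2 * m i)
        exact h1.smul_const (EuclideanSpace.proj i : EuclideanSpace ℝ (Fin N) →L[ℝ] ℝ)
    have hsnd : iteratedFDeriv ℝ 2 (fun z => Upot m z + inertia m z) x ![y, y] = F2 y y := by
      rw [iteratedFDeriv_two_apply]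
      have h1 : fderiv ℝ (fderiv ℝ (fun z => Upot m z + inertia m z)) x = fderiv ℝ F1 x :=
        Filter.EventuallyEq.fderiv_eq hfW
      rw [h1, hF1'.fderiv]
      simp
    have hnorm : ‖y‖ ^ 2 = ∑ i, y i ^ 2 := by
      rw [EuclideanSpace.norm_eq, Real.sq_sqrt (by positivity)]
      refine Finset.sum_congr rfl fun i _ => ?_
      rw [Real.norm_eq_abs, sq_abs]
    have hinf : ∀ i, (⨅ i, m i) ≤ m i := fun i =>
      ciInf_le (Finite.bddBelow_range m) i
    rw [ge_iff_le, hsnd, hF2]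
    simp only [ContinuousLinearMap.add_apply, ContinuousLinearMap.sum_apply,
      ContinuousLinearMap.smulRight_apply, ContinuousLinearMap.smul_apply, smul_eq_mul]
    have hpair : 0 ≤ ∑ i, ∑ j ∈ Finset.Ioi i,
        2 * (m i * m j) * ((Mij x i j) x ^ 3)⁻¹ * ((Mij x i j) y) * ((Mij x i j) y) := by
      refine Finset.sum_nonneg fun i _ => Finset.sum_nonneg fun j hj => ?_
      have hij : i < j := Finset.mem_Ioi.mp hj
      have hM : 0 < Mij x i j x := Mij_pos x (hx i j hij.ne)
      have hmi := (hm i).le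
      have hmj := (hm j).le
      have hcoef : 0 ≤ 2 * (m i * m j) * ((Mij x i j) x ^ 3)⁻¹ := by positivity
      nlinarith [mul_nonneg hcoef (mul_self_nonneg ((Mij x i j) y))]
    have hinert : 2 * (⨅ i, m i) * ‖y‖ ^ 2 ≤ ∑ i, 2 * m i * y i * y i := by
      rw [hnorm, Finset.mul_sum]
      refine Finset.sum_le_sum fun i _ => ?_
      have h1 : (⨅ i, m i) * y i ^ 2 ≤ m i * y i ^ 2 :=
        mul_le_mul_of_nonneg_right (hinf i) (sq_nonneg _)
      nlinarith [h1]
    exact le_add_of_nonneg_of_le hpair hinert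
  · -- strict convexity on each component
    intro σ
    have hconv : Convex ℝ {x : EuclideanSpace ℝ (Fin N) | StrictMono (x ∘ σ)} := by
      intro a ha b hb t s ht hs hts
      simp only [Set.mem_setOf_eq] at ha hb ⊢
      intro k l hkl
      have h1 : a (σ k) < a (σ l) := ha hkl
      have h2 : b (σ k) < b (σ l) := hb hkl
      simp only [Function.comp_apply, PiLp.add_apply, PiLp.smul_apply, smul_eq_mul]
      have k1 : t * a (σ k) ≤ t * a (σ l) := mul_le_mul_of_nonneg_left h1.le ht
      have k2 : s * b (σ k) ≤ s * b (σ l) := mul_le_mul_of_nonneg_left h2.le hs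
      have hts' : 0 < t ∨ 0 < s := by
        by_contra h
        push_neg at h
        have : t = 0 := le_antisymm h.1 ht
        have : s = 0 := le_antisymm h.2 hs
        simp_all
      rcases hts' with hp | hp
      · exact add_lt_add_of_lt_of_le (mul_lt_mul_of_pos_left h1 hp) k2
      · exact add_lt_add_of_le_of_lt k1 (mul_lt_mul_of_pos_left h2 hp)
    refine ⟨hconv, ?_⟩
    intro a ha b hb hab t s ht hs hts
    simp only [Set.mem_setOf_eq] at ha hb
    have hU : Upot m (t • a + s • b) ≤ t * Upot m a + s * Upot m b := by
      unfold Upot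
      rw [Finset.mul_sum, Finset.mul_sum, ← Finset.sum_add_distrib]
      refine Finset.sum_le_sum fun i _ => ?_
      rw [Finset.mul_sum, Finset.mul_sum, ← Finset.sum_add_distrib]
      refine Finset.sum_le_sum fun j hj => ?_
      have hij : i < j := Finset.mem_Ioi.mp hj
      have hc0 : (0:ℝ) ≤ m i * m j := mul_nonneg (hm i).le (hm j).le
      have hki : σ.symm i ≠ σ.symm j := fun h => hij.ne (by simpa using congrArg σ h)
      rcases hki.lt_or_gt with h | h
      · have hA : a i < a j := by
          have h' := ha h
          simp only [Function.comp_apply] at h'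
          rw [Equiv.apply_symm_apply, Equiv.apply_symm_apply] at h'
          exact h'
        have hB : b i < b j := by
          have h' := hb h
          simp only [Function.comp_apply] at h'
          rw [Equiv.apply_symm_apply, Equiv.apply_symm_apply] at h'
          exact h'
        have hcomb : |(t • a + s • b) i - (t • a + s • b) j|
            = t * (a j - a i) + s * (b j - b i) := by
          simp only [PiLp.add_apply, PiLp.smul_apply, smul_eq_mul]
          rw [abs_sub_comm, abs_of_pos (by nlinarith)]
          ring
        rw [hcomb, abs_sub_comm (a i), abs_of_pos (by linarith),
          abs_sub_comm (b i), abs_of_pos (by linarith)]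
        exact aux_harm hc0 (by linarith) (by linarith) ht.le hs.le hts
      · have hA : a j < a i := by
          have h' := ha h
          simp only [Function.comp_apply] at h'
          rw [Equiv.apply_symm_apply, Equiv.apply_symm_apply] at h'
          exact h'
        have hB : b j < b i := by
          have h' := hb h
          simp only [Function.comp_apply] at h'
          rw [Equiv.apply_symm_apply, Equiv.apply_symm_apply] at h'
          exact h'
        have hcomb : |(t • a + s • b) i - (t • a + s • b) j|
            = t * (a i - a j) + s * (b i - b j) := by
          simp only [PiLp.add_apply, PiLp.smul_apply, smul_eq_mul]
          rw [abs_of_pos (by nlinarith)]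
          ring
        rw [hcomb, abs_of_pos (by linarith), abs_of_pos (by linarith)]
        exact aux_harm hc0 (by linarith) (by linarith) ht.le hs.le hts
    have hI : inertia m (t • a + s • b) < t * inertia m a + s * inertia m b := by
      have hex : ∃ i, a i ≠ b i := by
        by_contra h
        push_neg at h
        exact hab (PiLp.ext h)
      obtain ⟨i0, hi0⟩ := hex
      have key : t * inertia m a + s * inertia m b - inertia m (t • a + s • b)
          = t * s * ∑ i, m i * (a i - b i) ^ 2 := by
        have hs1 : s = 1 - t := by linarith
        subst hs1
        unfold inertia
        simp only [PiLp.add_apply, PiLp.smul_apply, smul_eq_mul]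
        rw [Finset.mul_sum, Finset.mul_sum, Finset.mul_sum, ← Finset.sum_add_distrib,
          ← Finset.sum_sub_distrib]
        refine Finset.sum_congr rfl fun i _ => ?_
        ring
      have hpos : 0 < ∑ i, m i * (a i - b i) ^ 2 := by
        refine Finset.sum_pos' (fun i _ => mul_nonneg (hm i).le (sq_nonneg _)) ⟨i0, Finset.mem_univ _, ?_⟩
        have h2 : 0 < (a i0 - b i0) ^ 2 := by
          rcases (sub_ne_zero.mpr hi0).lt_or_gt with h | h <;> nlinarith
        exact mul_pos (hm i0) h2
      nlinarith [mul_pos (mul_pos ht hs) hpos]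
    simp only [smul_eq_mul]
    rw [mul_add, mul_add]
    linarith
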